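/- Let A and B be graded-commutative real Poincaré duality algebras of formal dimensions 2n₁ and 2n₂, with distinguished classes ω₁ ∈ A², ω₂ ∈ B². Set n = n₁ + n₂ and ω = ω₁⊗1 + 1⊗ω₂ in the graded tensor product A ⊗ B. For any s ≤ n − 1: if multiplication by ω^{n-i} is an isomorphism (A⊗B)^i → (A⊗B)^{2n-i} for all i ≤ s, then multiplication by ω₁^{n₁-i} is an isomorphism A^i → A^{2n₁-i} for all i ≤ min(s, n₁−1). -/
import Mathlib

open Module

section Aux

variable {A : Type*} [Ring A] [Algebra ℝ A] [FiniteDimensional ℝ A]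
  (𝒜 : ℕ → Submodule ℝ A) [GradedRing 𝒜]

lemma pd_dim_le (N : ℕ)
    (hdim : Module.finrank ℝ (𝒜 N) = 1)
    (hnd : ∀ k, k ≤ N → ∀ a ∈ 𝒜 k, (∀ b ∈ 𝒜 (N - k), a * b = 0) → a = 0)
    (k : ℕ) (hk : k ≤ N) :
    Module.finrank ℝ (𝒜 k) ≤ Module.finrank ℝ (𝒜 (N - k)) := by
  set l := N - k with hl
  have hkl : k + l = N := by omega
  let Φ : 𝒜 k →ₗ[ℝ] (𝒜 l →ₗ[ℝ] 𝒜 N) :=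
    { toFun := fun a =>
      { toFun := fun b => ⟨(a : A) * (b : A), hkl ▸ SetLike.mul_mem_graded a.2 b.2⟩
        map_add' := fun b c => Subtype.ext (by simp [mul_add])
        map_smul' := fun r b => Subtype.ext (by simp [mul_smul_comm]) }
      map_add' := fun a b => LinearMap.ext fun c => Subtype.ext (by simp [add_mul])
      map_smul' := fun r a => LinearMap.ext fun c => Subtype.ext (by simp [smul_mul_assoc]) }
  have hΦ : Function.Injective Φ := by
    rw [injective_iff_map_eq_zero]
    intro a ha
    have : (a : A) = 0 := by
      apply hnd k hk a a.2
      intro b hb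
      have := congrArg (fun φ => ((φ ⟨b, hb⟩ : 𝒜 N) : A)) ha
      simpa [Φ] using this
    exact Subtype.ext this
  calc Module.finrank ℝ (𝒜 k) ≤ Module.finrank ℝ (𝒜 l →ₗ[ℝ] 𝒜 N) :=
        LinearMap.finrank_le_finrank_of_injective hΦ
    _ = Module.finrank ℝ (𝒜 l) * Module.finrank ℝ (𝒜 N) := Module.finrank_linearMap ℝ ℝ _ _
    _ = Module.finrank ℝ (𝒜 l) := by rw [hdim, mul_one]

lemma pd_dim_eq (N : ℕ)
    (hdim : Module.finrank ℝ (𝒜 N) = 1)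
    (hnd : ∀ k, k ≤ N → ∀ a ∈ 𝒜 k, (∀ b ∈ 𝒜 (N - k), a * b = 0) → a = 0)
    (k : ℕ) (hk : k ≤ N) :
    Module.finrank ℝ (𝒜 k) = Module.finrank ℝ (𝒜 (N - k)) := by
  have h1 := pd_dim_le 𝒜 N hdim hnd k hk
  have h2 := pd_dim_le 𝒜 N hdim hnd (N - k) (by omega)
  rw [show N - (N - k) = k by omega] at h2
  omega

end Aux

theorem stmt2 {A B T : Type*} [Ring A] [Algebra ℝ A] [Ring B] [Algebra ℝ B]
    [Ring T] [Algebra ℝ T]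
    [FiniteDimensional ℝ A] [FiniteDimensional ℝ B]
    (𝒜 : ℕ → Submodule ℝ A) (ℬ : ℕ → Submodule ℝ B) (𝒯 : ℕ → Submodule ℝ T)
    [GradedRing 𝒜] [GradedRing ℬ] [GradedRing 𝒯]
    (n₁ n₂ : ℕ) (ω₁ : A) (ω₂ : B) (hω₁ : ω₁ ∈ 𝒜 2) (hω₂ : ω₂ ∈ ℬ 2)
    -- Poincaré duality algebra structure on A
    (htopA : ∀ k, 2 * n₁ < k → 𝒜 k = ⊥)
    (hcommA : ∀ i j : ℕ, ∀ a ∈ 𝒜 i, ∀ b ∈ 𝒜 j,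
      a * b = ((-1 : ℝ) ^ (i * j)) • (b * a))
    (hdimA : Module.finrank ℝ (𝒜 (2 * n₁)) = 1)
    (hndA : ∀ k, k ≤ 2 * n₁ → ∀ a ∈ 𝒜 k,
      (∀ b ∈ 𝒜 (2 * n₁ - k), a * b = 0) → a = 0)
    -- Poincaré duality algebra structure on B
    (htopB : ∀ k, 2 * n₂ < k → ℬ k = ⊥)
    (hcommB : ∀ i j : ℕ, ∀ a ∈ ℬ i, ∀ b ∈ ℬ j,
      a * b = ((-1 : ℝ) ^ (i * j)) • (b * a))
    (hdimB : Module.finrank ℝ (ℬ (2 * n₂)) = 1)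
    (hndB : ∀ k, k ≤ 2 * n₂ → ∀ a ∈ ℬ k,
      (∀ b ∈ ℬ (2 * n₂ - k), a * b = 0) → a = 0)
    -- T is the graded tensor product of A and B
    (f : A →ₐ[ℝ] T) (g : B →ₐ[ℝ] T)
    (hf : ∀ i, ∀ a ∈ 𝒜 i, f a ∈ 𝒯 i) (hg : ∀ j, ∀ b ∈ ℬ j, g b ∈ 𝒯 j)
    (hkoszul : ∀ i j : ℕ, ∀ a ∈ 𝒜 i, ∀ b ∈ ℬ j,
      g b * f a = ((-1 : ℝ) ^ (i * j)) • (f a * g b))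
    (htens : Function.Bijective
      (TensorProduct.lift ((LinearMap.mul ℝ T).compl₁₂ f.toLinearMap g.toLinearMap)))
    (hspan : ∀ k, 𝒯 k = ⨆ p : {p : ℕ × ℕ // p.1 + p.2 = k},
      Submodule.span ℝ {z | ∃ a ∈ 𝒜 p.1.1, ∃ b ∈ ℬ p.1.2, z = f a * g b})
    -- the s-Lefschetz hypothesis on T
    (s : ℕ) (hs : s ≤ n₁ + n₂ - 1)
    (hL : ∀ i, i ≤ s →
      (∀ t ∈ 𝒯 i, (f ω₁ + g ω₂) ^ (n₁ + n₂ - i) * t = 0 → t = 0) ∧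
      (∀ u ∈ 𝒯 (2 * (n₁ + n₂) - i), ∃ t ∈ 𝒯 i,
        (f ω₁ + g ω₂) ^ (n₁ + n₂ - i) * t = u)) :
    ∀ i, i ≤ min s (n₁ - 1) →
      (∀ a ∈ 𝒜 i, ω₁ ^ (n₁ - i) * a = 0 → a = 0) ∧
      (∀ b ∈ 𝒜 (2 * n₁ - i), ∃ a ∈ 𝒜 i, ω₁ ^ (n₁ - i) * a = b) := by
  -- B is nontrivial
  have hBnt : Nontrivial B := by
    have h1 : 0 < Module.finrank ℝ (ℬ (2 * n₂)) := by rw [hdimB]; norm_num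
    have : Nontrivial (ℬ (2 * n₂)) := Module.nontrivial_of_finrank_pos h1
    obtain ⟨x, hx⟩ := exists_ne (0 : ℬ (2 * n₂))
    exact nontrivial_of_ne (x : B) 0 (fun h => hx (Subtype.ext h))
  have hone : (1 : B) ≠ 0 := one_ne_zero
  -- f is injective
  have hfinj : ∀ a : A, f a = 0 → a = 0 := by
    intro a ha
    have hts : Function.Injective (LinearMap.toSpanSingleton ℝ B 1) :=
      smul_left_injective ℝ hone
    have h1 : Function.Injective
        (LinearMap.lTensor A (LinearMap.toSpanSingleton ℝ B 1)) :=
      Module.Flat.lTensor_preserves_injective_linearMap _ hts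
    have hten : ∀ c : A, c ⊗ₜ[ℝ] (1 : B) = 0 → c = 0 := by
      intro c hc
      have hc' : (LinearMap.lTensor A (LinearMap.toSpanSingleton ℝ B 1))
          ((TensorProduct.rid ℝ A).symm c) = 0 := by
        simpa [TensorProduct.rid_symm_apply, LinearMap.lTensor_tmul,
          LinearMap.toSpanSingleton_apply] using hc
      have h2 : (TensorProduct.rid ℝ A).symm c = 0 := by
        apply h1
        rw [hc']
        exact ((LinearMap.lTensor A (LinearMap.toSpanSingleton ℝ B 1)).map_zero).symm
      rw [← (TensorProduct.rid ℝ A).apply_symm_apply c, h2]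
      exact (TensorProduct.rid ℝ A).map_zero
    apply hten
    apply htens.injective
    simp [TensorProduct.lift.tmul, LinearMap.compl₁₂_apply, ha]
  intro i hi
  have his : i ≤ s := le_trans hi (min_le_left _ _)
  have hin : i ≤ n₁ := le_trans (le_trans hi (min_le_right _ _)) (Nat.sub_le _ _)
  set d := n₁ - i with hd
  set m := n₁ + n₂ - i with hm
  -- injectivity part
  have hinj : ∀ a ∈ 𝒜 i, ω₁ ^ d * a = 0 → a = 0 := by
    intro a ha h0
    apply hfinj
    apply (hL i his).1 (f a) (hf i a ha)
    have hcomm : Commute (f ω₁) (g ω₂) := by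
      have hk := hkoszul 2 2 ω₁ hω₁ ω₂ hω₂
      norm_num at hk
      exact hk.symm
    rw [hcomm.add_pow, Finset.sum_mul]
    apply Finset.sum_eq_zero
    intro k hk
    rw [← hm]
    have hkm : k ≤ m := by have := Finset.mem_range.mp hk; omega
    have hgmem : ω₂ ^ (m - k) ∈ ℬ ((m - k) • 2) := SetLike.pow_mem_graded _ hω₂
    have key : f ω₁ ^ k * g ω₂ ^ (m - k) * f a = 0 := by
      rw [← map_pow, ← map_pow, mul_assoc,
        hkoszul i ((m - k) • 2) a ha _ hgmem]
      have hsign : ((-1 : ℝ)) ^ (i * ((m - k) • 2)) = 1 := by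
        apply Even.neg_one_pow
        simp only [smul_eq_mul]
        exact ⟨i * (m - k), by ring⟩
      rw [hsign, one_smul]
      by_cases hc : d ≤ k
      · have hza : ω₁ ^ k * a = 0 := by
          rw [show k = (k - d) + d by omega, pow_add, mul_assoc, h0, mul_zero]
        calc f (ω₁ ^ k) * (f a * g (ω₂ ^ (m - k)))
            = f (ω₁ ^ k * a) * g (ω₂ ^ (m - k)) := by rw [map_mul, mul_assoc]
          _ = 0 := by rw [hza, map_zero, zero_mul]
      · have hz : ω₂ ^ (m - k) = 0 := by
          have hbot := htopB ((m - k) • 2) (by simp only [smul_eq_mul]; omega)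
          rw [hbot] at hgmem
          simpa using hgmem
        rw [hz, map_zero, mul_zero, mul_zero]
    have e1 : f ω₁ ^ k * g ω₂ ^ (m - k) * ((m.choose k : ℕ) : T) * f a
        = f ω₁ ^ k * g ω₂ ^ (m - k) * f a * ((m.choose k : ℕ) : T) := by
      rw [mul_assoc (f ω₁ ^ k * g ω₂ ^ (m - k)) _ (f a),
        (Nat.cast_commute (m.choose k) (f a)).eq, ← mul_assoc]
    rw [e1, key, zero_mul]
  refine ⟨hinj, ?_⟩
  -- surjectivity part
  intro b hb
  have hmemL : ∀ a : 𝒜 i, ω₁ ^ d * (a : A) ∈ 𝒜 (2 * n₁ - i) := by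
    intro a
    have h1 := SetLike.mul_mem_graded (SetLike.pow_mem_graded d hω₁) a.2
    have he : d • 2 + i = 2 * n₁ - i := by simp only [smul_eq_mul]; omega
    rwa [he] at h1
  let L : 𝒜 i →ₗ[ℝ] 𝒜 (2 * n₁ - i) :=
    { toFun := fun a => ⟨ω₁ ^ d * (a : A), hmemL a⟩
      map_add' := fun a b => Subtype.ext (by simp [mul_add])
      map_smul' := fun r a => Subtype.ext (by simp [mul_smul_comm]) }
  have hLinj : Function.Injective L := by
    rw [injective_iff_map_eq_zero]
    intro a ha
    have : ω₁ ^ d * (a : A) = 0 := by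
      have := congrArg (fun x : 𝒜 (2 * n₁ - i) => (x : A)) ha
      simpa [L] using this
    exact Subtype.ext (hinj a a.2 this)
  have hrank : Module.finrank ℝ (𝒜 i) = Module.finrank ℝ (𝒜 (2 * n₁ - i)) :=
    pd_dim_eq 𝒜 (2 * n₁) hdimA hndA i (by omega)
  have hLsurj : Function.Surjective L :=
    (LinearMap.injective_iff_surjective_of_finrank_eq_finrank hrank).mp hLinj
  obtain ⟨a, ha⟩ := hLsurj ⟨b, hb⟩
  exact ⟨a, a.2, congrArg Subtype.val ha⟩
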